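/- Let Δ ⊆ ℝ³ be the set of points (x,y,z) with 1+x+y+z ≥ 0, 1+x−y−z ≥ 0, 1−x+y−z ≥ 0 and 1−x−y+z ≥ 0. Then the Lebesgue volume of Δ_+ := Δ ∩ {(x,y,z) : x > 0, y > 0, z > 0} (K3 Markov matrices with positive eigenvalues) is 1/2, and the Lebesgue volume of Δ_* := Δ ∩ {(x,y,z) : x+y ≥ 0, x+z ≥ 0, y+z ≥ 0} (K3 Markov matrices with a ≥ b, a ≥ c and a ≥ d) is 2/3. -/

import Mathlib

open MeasureTheory Set

/-- The simplex of eigenvalue triples of K3 Markov matrices. -/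
def Δ : Set (ℝ × ℝ × ℝ) :=
  {p | 0 ≤ 1 + p.1 + p.2.1 + p.2.2 ∧ 0 ≤ 1 + p.1 - p.2.1 - p.2.2 ∧
       0 ≤ 1 - p.1 + p.2.1 - p.2.2 ∧ 0 ≤ 1 - p.1 - p.2.1 + p.2.2}

private lemma lin_int (a b c d : ℝ) :
    ∫ y in a..b, (c + d * y) = c * (b - a) + d * ((b ^ 2 - a ^ 2) / 2) := by
  rw [intervalIntegral.integral_add (f := fun _ => c) (g := fun y => d * y)
      (continuous_const.intervalIntegrable _ _)
      ((continuous_const.mul continuous_id').intervalIntegrable _ _),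
    intervalIntegral.integral_const, intervalIntegral.integral_const_mul, integral_id,
    smul_eq_mul]
  ring

private lemma quad_int (a b c d e : ℝ) :
    ∫ y in a..b, (c + d * y + e * y ^ 2) =
      c * (b - a) + d * ((b ^ 2 - a ^ 2) / 2) + e * ((b ^ 3 - a ^ 3) / 3) := by
  rw [intervalIntegral.integral_add (f := fun y => c + d * y) (g := fun y => e * y ^ 2)
      ((continuous_const.add (continuous_const.mul continuous_id')).intervalIntegrable _ _)
      ((continuous_const.mul (continuous_id'.pow 2)).intervalIntegrable _ _),
    lin_int, intervalIntegral.integral_const_mul, integral_pow]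
  norm_num

private lemma vol3 (S : Set (ℝ × ℝ × ℝ)) (hS : MeasurableSet S) :
    volume S = ∫⁻ x, volume {q : ℝ × ℝ | (x, q) ∈ S} := by
  rw [MeasureTheory.Measure.volume_eq_prod, MeasureTheory.Measure.prod_apply hS]
  rfl

private lemma vol2 (s : Set ℝ) (hs : MeasurableSet s) (f g : ℝ → ℝ)
    (hf : Measurable f) (hg : Measurable g) :
    volume {q : ℝ × ℝ | q.1 ∈ s ∧ f q.1 ≤ q.2 ∧ q.2 ≤ g q.1} =
      ∫⁻ y in s, ENNReal.ofReal (g y - f y) := by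
  have hm : MeasurableSet {q : ℝ × ℝ | q.1 ∈ s ∧ f q.1 ≤ q.2 ∧ q.2 ≤ g q.1} := by
    have : {q : ℝ × ℝ | q.1 ∈ s ∧ f q.1 ≤ q.2 ∧ q.2 ≤ g q.1} =
        (Prod.fst ⁻¹' s) ∩ ({q : ℝ × ℝ | f q.1 ≤ q.2} ∩ {q : ℝ × ℝ | q.2 ≤ g q.1}) := rfl
    rw [this]
    exact (measurable_fst hs).inter
      ((measurableSet_le (hf.comp measurable_fst) measurable_snd).inter
        (measurableSet_le measurable_snd (hg.comp measurable_fst)))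
  rw [MeasureTheory.Measure.volume_eq_prod, MeasureTheory.Measure.prod_apply hm,
    ← MeasureTheory.lintegral_indicator hs]
  refine lintegral_congr fun y => ?_
  by_cases hy : y ∈ s
  · have h1 : Prod.mk y ⁻¹' {q : ℝ × ℝ | q.1 ∈ s ∧ f q.1 ≤ q.2 ∧ q.2 ≤ g q.1}
        = Icc (f y) (g y) := by
      ext z; simp [hy, mem_Icc]
    rw [h1, Real.volume_Icc, indicator_of_mem hy]
  · have h1 : Prod.mk y ⁻¹' {q : ℝ × ℝ | q.1 ∈ s ∧ f q.1 ≤ q.2 ∧ q.2 ≤ g q.1} = ∅ := by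
      ext z; simp [hy]
    rw [h1, indicator_of_notMem hy]
    exact measure_empty

private lemma lint_Ioc (a b : ℝ) (hab : a ≤ b) (f : ℝ → ℝ) (hf : Continuous f)
    (h0 : ∀ y ∈ Ioc a b, 0 ≤ f y) :
    ∫⁻ y in Ioc a b, ENNReal.ofReal (f y) = ENNReal.ofReal (∫ y in a..b, f y) := by
  rw [intervalIntegral.integral_of_le hab,
    ← MeasureTheory.ofReal_integral_eq_lintegral_ofReal
      ((hf.integrableOn_Icc).mono_set Ioc_subset_Icc_self)
      ((ae_restrict_iff' measurableSet_Ioc).2 (ae_of_all _ h0))]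

example : ENNReal.ofReal ((1:ℝ)/2) = 1/2 := by
  rw [ENNReal.ofReal_div_of_pos (by norm_num)]
  norm_num

example : ENNReal.ofReal ((2:ℝ)/3) = 2/3 := by
  rw [ENNReal.ofReal_div_of_pos (by norm_num)]
  norm_num

private def R1 : Set (ℝ × ℝ × ℝ) := Δ ∩ {p | 0 ≤ p.1 ∧ 0 ≤ p.2.1 ∧ 0 ≤ p.2.2}

private lemma measurable_R1 : MeasurableSet R1 := by
  have : R1 = {p : ℝ × ℝ × ℝ | 0 ≤ 1 + p.1 + p.2.1 + p.2.2} ∩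
      ({p : ℝ × ℝ × ℝ | 0 ≤ 1 + p.1 - p.2.1 - p.2.2} ∩
      ({p : ℝ × ℝ × ℝ | 0 ≤ 1 - p.1 + p.2.1 - p.2.2} ∩
      ({p : ℝ × ℝ × ℝ | 0 ≤ 1 - p.1 - p.2.1 + p.2.2} ∩
      ({p : ℝ × ℝ × ℝ | 0 ≤ p.1} ∩
      ({p : ℝ × ℝ × ℝ | 0 ≤ p.2.1} ∩ {p : ℝ × ℝ × ℝ | 0 ≤ p.2.2}))))) := by
    ext p; simp [R1, Δ, and_assoc]
  rw [this]
  refine .inter ?_ (.inter ?_ (.inter ?_ (.inter ?_ (.inter ?_ (.inter ?_ ?_))))) <;>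
    exact measurableSet_le measurable_const (by fun_prop)

private lemma sliceR1_empty (x : ℝ) (hx : x ∉ Icc (0:ℝ) 1) :
    {q : ℝ × ℝ | (x, q) ∈ R1} = ∅ := by
  ext ⟨y, z⟩
  simp only [R1, Δ, mem_inter_iff, mem_setOf_eq, mem_empty_iff_false, iff_false]
  rintro ⟨⟨h1, h2, h3, h4⟩, hx0, hy0, hz0⟩
  exact hx (mem_Icc.2 ⟨hx0, by linarith⟩)

private lemma sliceR1 (x : ℝ) (hx0 : 0 ≤ x) (hx1 : x ≤ 1) :
    {q : ℝ × ℝ | (x, q) ∈ R1} =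
      {q : ℝ × ℝ | q.1 ∈ Icc (0:ℝ) 1 ∧
        max 0 (x + q.1 - 1) ≤ q.2 ∧ q.2 ≤ min (1 + x - q.1) (1 - x + q.1)} := by
  ext ⟨y, z⟩
  simp only [R1, Δ, mem_inter_iff, mem_setOf_eq, mem_Icc, max_le_iff, le_min_iff]
  constructor
  · rintro ⟨⟨h1, h2, h3, h4⟩, hx, hy, hz⟩
    exact ⟨⟨hy, by linarith⟩, ⟨hz, by linarith⟩, by linarith, by linarith⟩
  · rintro ⟨⟨hy0, hy1⟩, ⟨hz0, hz1⟩, hz2, hz3⟩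
    exact ⟨⟨by linarith, by linarith, by linarith, by linarith⟩, hx0, hy0, hz0⟩

private lemma areaR1 (x : ℝ) (hx0 : 0 ≤ x) (hx1 : x ≤ 1) :
    volume {q : ℝ × ℝ | (x, q) ∈ R1} =
      ENNReal.ofReal ((1 + 2 * x - 3 * x ^ 2) / 2) := by
  have hfc : Continuous fun y : ℝ => min (1 + x - y) (1 - x + y) - max 0 (x + y - 1) := by
    fun_prop
  calc volume {q : ℝ × ℝ | (x, q) ∈ R1}
      = volume {q : ℝ × ℝ | q.1 ∈ Icc (0:ℝ) 1 ∧
          max 0 (x + q.1 - 1) ≤ q.2 ∧ q.2 ≤ min (1 + x - q.1) (1 - x + q.1)} := by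
        rw [sliceR1 x hx0 hx1]
    _ = ∫⁻ y in Icc (0:ℝ) 1,
          ENNReal.ofReal (min (1 + x - y) (1 - x + y) - max 0 (x + y - 1)) :=
        vol2 (Icc (0:ℝ) 1) measurableSet_Icc (fun y => max 0 (x + y - 1))
          (fun y => min (1 + x - y) (1 - x + y)) (by fun_prop) (by fun_prop)
    _ = ∫⁻ y in Ioc (0:ℝ) 1,
          ENNReal.ofReal (min (1 + x - y) (1 - x + y) - max 0 (x + y - 1)) :=
        (setLIntegral_congr Ioc_ae_eq_Icc).symm
    _ = ENNReal.ofReal (∫ y in (0:ℝ)..1,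
          (min (1 + x - y) (1 - x + y) - max 0 (x + y - 1))) := by
        refine lint_Ioc 0 1 (by norm_num) _ hfc fun y hy => ?_
        obtain ⟨hy0, hy1⟩ := hy
        rcases le_total 0 (x + y - 1) with h | h
        · rw [max_eq_right h]
          exact sub_nonneg.2 (le_min (by linarith) (by linarith))
        · rw [max_eq_left h, sub_zero]
          exact le_min (by linarith) (by linarith)
    _ = ENNReal.ofReal ((1 + 2 * x - 3 * x ^ 2) / 2) := by
        congr 1
        rcases le_total x (1/2) with hx2 | hx2
        · have i1 : IntervalIntegrable
              (fun y => min (1 + x - y) (1 - x + y) - max 0 (x + y - 1)) volume 0 x :=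
            hfc.intervalIntegrable _ _
          have i2 : IntervalIntegrable
              (fun y => min (1 + x - y) (1 - x + y) - max 0 (x + y - 1)) volume x (1 - x) :=
            hfc.intervalIntegrable _ _
          have i3 : IntervalIntegrable
              (fun y => min (1 + x - y) (1 - x + y) - max 0 (x + y - 1)) volume (1-x) 1 :=
            hfc.intervalIntegrable _ _
          have s1 := intervalIntegral.integral_add_adjacent_intervals i1 i2
          have s2 := intervalIntegral.integral_add_adjacent_intervals
            (i1.trans i2) i3
          have e1 : ∫ y in (0:ℝ)..x,
              (min (1 + x - y) (1 - x + y) - max 0 (x + y - 1)) =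
              (1-x) * (x - 0) + 1 * ((x^2 - 0^2)/2) := by
            rw [← lin_int]
            refine intervalIntegral.integral_congr fun y hy => ?_
            rw [uIcc_of_le hx0] at hy
            obtain ⟨hy0, hy1⟩ := hy
            rw [min_eq_right (by linarith), max_eq_left (by linarith)]
            ring
          have e2 : ∫ y in x..(1-x),
              (min (1 + x - y) (1 - x + y) - max 0 (x + y - 1)) =
              (1+x) * ((1-x) - x) + (-1) * (((1-x)^2 - x^2)/2) := by
            rw [← lin_int]
            refine intervalIntegral.integral_congr fun y hy => ?_
            rw [uIcc_of_le (by linarith)] at hy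
            obtain ⟨hy0, hy1⟩ := hy
            rw [min_eq_left (by linarith), max_eq_left (by linarith)]
            ring
          have e3 : ∫ y in (1-x)..1,
              (min (1 + x - y) (1 - x + y) - max 0 (x + y - 1)) =
              2 * (1 - (1-x)) + (-2) * ((1^2 - (1-x)^2)/2) := by
            rw [← lin_int]
            refine intervalIntegral.integral_congr fun y hy => ?_
            rw [uIcc_of_le (by linarith)] at hy
            obtain ⟨hy0, hy1⟩ := hy
            rw [min_eq_left (by linarith), max_eq_right (by linarith)]
            ring
          rw [← s2, ← s1, e1, e2, e3]; ring
        · have i1 : IntervalIntegrable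
              (fun y => min (1 + x - y) (1 - x + y) - max 0 (x + y - 1)) volume 0 (1-x) :=
            hfc.intervalIntegrable _ _
          have i2 : IntervalIntegrable
              (fun y => min (1 + x - y) (1 - x + y) - max 0 (x + y - 1)) volume (1-x) x :=
            hfc.intervalIntegrable _ _
          have i3 : IntervalIntegrable
              (fun y => min (1 + x - y) (1 - x + y) - max 0 (x + y - 1)) volume x 1 :=
            hfc.intervalIntegrable _ _
          have s1 := intervalIntegral.integral_add_adjacent_intervals i1 i2
          have s2 := intervalIntegral.integral_add_adjacent_intervals (i1.trans i2) i3
          have e1 : ∫ y in (0:ℝ)..(1-x),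
              (min (1 + x - y) (1 - x + y) - max 0 (x + y - 1)) =
              (1-x) * ((1-x) - 0) + 1 * (((1-x)^2 - 0^2)/2) := by
            rw [← lin_int]
            refine intervalIntegral.integral_congr fun y hy => ?_
            rw [uIcc_of_le (by linarith)] at hy
            obtain ⟨hy0, hy1⟩ := hy
            rw [min_eq_right (by linarith), max_eq_left (by linarith)]
            ring
          have e2 : ∫ y in (1-x)..x,
              (min (1 + x - y) (1 - x + y) - max 0 (x + y - 1)) =
              (2-2*x) * (x - (1-x)) + 0 * ((x^2 - (1-x)^2)/2) := by
            rw [← lin_int]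
            refine intervalIntegral.integral_congr fun y hy => ?_
            rw [uIcc_of_le (by linarith)] at hy
            obtain ⟨hy0, hy1⟩ := hy
            rw [min_eq_right (by linarith), max_eq_right (by linarith)]
            ring
          have e3 : ∫ y in x..(1:ℝ),
              (min (1 + x - y) (1 - x + y) - max 0 (x + y - 1)) =
              2 * (1 - x) + (-2) * ((1^2 - x^2)/2) := by
            rw [← lin_int]
            refine intervalIntegral.integral_congr fun y hy => ?_
            rw [uIcc_of_le (by linarith)] at hy
            obtain ⟨hy0, hy1⟩ := hy
            rw [min_eq_left (by linarith), max_eq_right (by linarith)]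
            ring
          rw [← s2, ← s1, e1, e2, e3]; ring

private lemma volR1 : volume R1 = 1 / 2 := by
  rw [vol3 R1 measurable_R1]
  have step : ∀ x : ℝ, volume {q : ℝ × ℝ | (x, q) ∈ R1} =
      (Icc (0:ℝ) 1).indicator
        (fun x => ENNReal.ofReal ((1 + 2 * x - 3 * x ^ 2) / 2)) x := by
    intro x
    by_cases hx : x ∈ Icc (0:ℝ) 1
    · rw [indicator_of_mem hx]; exact areaR1 x hx.1 hx.2
    · rw [indicator_of_notMem hx, sliceR1_empty x hx]; exact measure_empty
  rw [lintegral_congr step, lintegral_indicator measurableSet_Icc _,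
    ← setLIntegral_congr Ioc_ae_eq_Icc,
    lint_Ioc 0 1 (by norm_num) _ (by fun_prop)
      (fun y hy => by obtain ⟨h0, h1⟩ := hy; nlinarith)]
  have : (fun x : ℝ => (1 + 2 * x - 3 * x ^ 2) / 2) =
      fun x : ℝ => 1/2 + 1 * x + (-3/2) * x ^ 2 := by funext y; ring
  rw [this, quad_int]
  rw [show (1:ℝ)/2 * (1 - 0) + 1 * ((1^2 - 0^2)/2) + (-3/2) * ((1^3-0^3)/3) = 1/2 by ring]
  rw [ENNReal.ofReal_div_of_pos (by norm_num)]
  norm_num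

private lemma vol_hyper1 : volume {p : ℝ × ℝ × ℝ | p.1 = 0} = 0 := by
  have h : {p : ℝ × ℝ × ℝ | p.1 = 0} = ({0} : Set ℝ) ×ˢ (univ : Set (ℝ × ℝ)) := by
    ext ⟨a, b, c⟩; simp [Set.mem_prod, eq_comm]
  rw [h, MeasureTheory.Measure.volume_eq_prod, MeasureTheory.Measure.prod_prod]
  simp

private lemma vol_hyper2 : volume {p : ℝ × ℝ × ℝ | p.2.1 = 0} = 0 := by
  have h : {p : ℝ × ℝ × ℝ | p.2.1 = 0} =
      (univ : Set ℝ) ×ˢ (({0} : Set ℝ) ×ˢ (univ : Set ℝ)) := by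
    ext ⟨a, b, c⟩; simp [Set.mem_prod, eq_comm]
  rw [h, MeasureTheory.Measure.volume_eq_prod, MeasureTheory.Measure.volume_eq_prod,
    MeasureTheory.Measure.prod_prod, MeasureTheory.Measure.prod_prod]
  simp

private lemma vol_hyper3 : volume {p : ℝ × ℝ × ℝ | p.2.2 = 0} = 0 := by
  have h : {p : ℝ × ℝ × ℝ | p.2.2 = 0} =
      (univ : Set ℝ) ×ˢ ((univ : Set ℝ) ×ˢ ({0} : Set ℝ)) := by
    ext ⟨a, b, c⟩; simp [Set.mem_prod, eq_comm]
  rw [h, MeasureTheory.Measure.volume_eq_prod, MeasureTheory.Measure.volume_eq_prod,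
    MeasureTheory.Measure.prod_prod, MeasureTheory.Measure.prod_prod]
  simp

private lemma vol_strict :
    volume (Δ ∩ {p : ℝ × ℝ × ℝ | 0 < p.1 ∧ 0 < p.2.1 ∧ 0 < p.2.2}) = volume R1 := by
  set N : Set (ℝ × ℝ × ℝ) :=
    {p : ℝ × ℝ × ℝ | p.1 = 0} ∪ ({p : ℝ × ℝ × ℝ | p.2.1 = 0} ∪ {p : ℝ × ℝ × ℝ | p.2.2 = 0})
    with hN
  have hNnull : volume N = 0 := by
    refine le_antisymm ?_ zero_le
    calc volume N ≤ volume {p : ℝ × ℝ × ℝ | p.1 = 0} +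
        (volume {p : ℝ × ℝ × ℝ | p.2.1 = 0} + volume {p : ℝ × ℝ × ℝ | p.2.2 = 0}) :=
          le_trans (measure_union_le _ _)
            (add_le_add le_rfl (measure_union_le _ _))
      _ = 0 := by rw [vol_hyper1, vol_hyper2, vol_hyper3]; simp
  refine le_antisymm (measure_mono (inter_subset_inter_right _
    fun p hp => ⟨hp.1.le, hp.2.1.le, hp.2.2.le⟩)) ?_
  have hsub : R1 ⊆ (Δ ∩ {p : ℝ × ℝ × ℝ | 0 < p.1 ∧ 0 < p.2.1 ∧ 0 < p.2.2}) ∪ N := by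
    rintro p ⟨hΔ, h1, h2, h3⟩
    rcases eq_or_lt_of_le h1 with h1' | h1'
    · exact Or.inr (Or.inl h1'.symm)
    rcases eq_or_lt_of_le h2 with h2' | h2'
    · exact Or.inr (Or.inr (Or.inl h2'.symm))
    rcases eq_or_lt_of_le h3 with h3' | h3'
    · exact Or.inr (Or.inr (Or.inr h3'.symm))
    exact Or.inl ⟨hΔ, h1', h2', h3'⟩
  calc volume R1 ≤ volume ((Δ ∩ {p : ℝ × ℝ × ℝ | 0 < p.1 ∧ 0 < p.2.1 ∧ 0 < p.2.2}) ∪ N) :=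
        measure_mono hsub
    _ ≤ volume (Δ ∩ {p : ℝ × ℝ × ℝ | 0 < p.1 ∧ 0 < p.2.1 ∧ 0 < p.2.2}) + volume N :=
        measure_union_le _ _
    _ = volume (Δ ∩ {p : ℝ × ℝ × ℝ | 0 < p.1 ∧ 0 < p.2.1 ∧ 0 < p.2.2}) := by
        rw [hNnull, add_zero]

private def R2 : Set (ℝ × ℝ × ℝ) :=
  Δ ∩ {p | 0 ≤ p.1 + p.2.1 ∧ 0 ≤ p.1 + p.2.2 ∧ 0 ≤ p.2.1 + p.2.2}

private lemma measurable_R2 : MeasurableSet R2 := by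
  have : R2 = {p : ℝ × ℝ × ℝ | 0 ≤ 1 + p.1 + p.2.1 + p.2.2} ∩
      ({p : ℝ × ℝ × ℝ | 0 ≤ 1 + p.1 - p.2.1 - p.2.2} ∩
      ({p : ℝ × ℝ × ℝ | 0 ≤ 1 - p.1 + p.2.1 - p.2.2} ∩
      ({p : ℝ × ℝ × ℝ | 0 ≤ 1 - p.1 - p.2.1 + p.2.2} ∩
      ({p : ℝ × ℝ × ℝ | 0 ≤ p.1 + p.2.1} ∩
      ({p : ℝ × ℝ × ℝ | 0 ≤ p.1 + p.2.2} ∩ {p : ℝ × ℝ × ℝ | 0 ≤ p.2.1 + p.2.2}))))) := by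
    ext p; simp [R2, Δ, and_assoc]
  rw [this]
  refine .inter ?_ (.inter ?_ (.inter ?_ (.inter ?_ (.inter ?_ (.inter ?_ ?_))))) <;>
    exact measurableSet_le measurable_const (by fun_prop)

private lemma sliceR2_empty (x : ℝ) (hx : x ∉ Icc (-1/3 : ℝ) 1) :
    {q : ℝ × ℝ | (x, q) ∈ R2} = ∅ := by
  ext ⟨y, z⟩
  simp only [R2, Δ, mem_inter_iff, mem_setOf_eq, mem_empty_iff_false, iff_false]
  rintro ⟨⟨h1, h2, h3, h4⟩, hxy, hxz, hyz⟩
  exact hx (mem_Icc.2 ⟨by linarith, by linarith⟩)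

private lemma sliceR2a (x : ℝ) (hx0 : -1/3 ≤ x) (hx1 : x ≤ 0) :
    {q : ℝ × ℝ | (x, q) ∈ R2} =
      {q : ℝ × ℝ | q.1 ∈ Icc (-x) (1 + 2*x) ∧ -x ≤ q.2 ∧ q.2 ≤ 1 + x - q.1} := by
  ext ⟨y, z⟩
  simp only [R2, Δ, mem_inter_iff, mem_setOf_eq, mem_Icc]
  constructor
  · rintro ⟨⟨h1, h2, h3, h4⟩, hxy, hxz, hyz⟩
    exact ⟨⟨by linarith, by linarith⟩, by linarith, by linarith⟩
  · rintro ⟨⟨hy0, hy1⟩, hz0, hz1⟩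
    exact ⟨⟨by linarith, by linarith, by linarith, by linarith⟩,
      by linarith, by linarith, by linarith⟩

private lemma areaR2a (x : ℝ) (hx0 : -1/3 ≤ x) (hx1 : x ≤ 0) :
    volume {q : ℝ × ℝ | (x, q) ∈ R2} =
      ENNReal.ofReal ((1 + 6*x + 9*x^2) / 2) := by
  calc volume {q : ℝ × ℝ | (x, q) ∈ R2}
      = volume {q : ℝ × ℝ | q.1 ∈ Icc (-x) (1 + 2*x) ∧ -x ≤ q.2 ∧ q.2 ≤ 1 + x - q.1} := by
        rw [sliceR2a x hx0 hx1]
    _ = ∫⁻ y in Icc (-x) (1 + 2*x), ENNReal.ofReal ((1 + x - y) - (-x)) :=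
        vol2 (Icc (-x) (1 + 2*x)) measurableSet_Icc (fun _ => -x) (fun y => 1 + x - y)
          measurable_const (by fun_prop)
    _ = ∫⁻ y in Ioc (-x) (1 + 2*x), ENNReal.ofReal ((1 + x - y) - (-x)) :=
        (setLIntegral_congr Ioc_ae_eq_Icc).symm
    _ = ENNReal.ofReal (∫ y in (-x)..(1 + 2*x), ((1 + x - y) - (-x))) :=
        lint_Ioc _ _ (by linarith) _ (by fun_prop) (fun y hy => by
          obtain ⟨hy0, hy1⟩ := hy; linarith)
    _ = ENNReal.ofReal ((1 + 6*x + 9*x^2) / 2) := by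
        congr 1
        rw [show (fun y : ℝ => (1 + x - y) - (-x)) = fun y : ℝ => (1 + 2*x) + (-1) * y by
          funext y; ring]
        rw [lin_int]; ring

private lemma sliceR2b (x : ℝ) (hx0 : 0 ≤ x) (hx1 : x ≤ 1/3) :
    {q : ℝ × ℝ | (x, q) ∈ R2} =
      {q : ℝ × ℝ | q.1 ∈ Icc (-x) 1 ∧
        max (-x) (max (-q.1) (x + q.1 - 1)) ≤ q.2 ∧
        q.2 ≤ min (1 + x - q.1) (1 - x + q.1)} := by
  ext ⟨y, z⟩
  simp only [R2, Δ, mem_inter_iff, mem_setOf_eq, mem_Icc, max_le_iff, le_min_iff]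
  constructor
  · rintro ⟨⟨h1, h2, h3, h4⟩, hxy, hxz, hyz⟩
    exact ⟨⟨by linarith, by linarith⟩, ⟨by linarith, by linarith, by linarith⟩,
      by linarith, by linarith⟩
  · rintro ⟨⟨hy0, hy1⟩, ⟨hz0, hz1, hz2⟩, hz3, hz4⟩
    exact ⟨⟨by linarith, by linarith, by linarith, by linarith⟩,
      by linarith, by linarith, by linarith⟩

private lemma areaR2b (x : ℝ) (hx0 : 0 ≤ x) (hx1 : x ≤ 1/3) :
    volume {q : ℝ × ℝ | (x, q) ∈ R2} =
      ENNReal.ofReal ((1 + 6*x - 11*x^2) / 2) := by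
  have hfc : Continuous fun y : ℝ =>
      min (1 + x - y) (1 - x + y) - max (-x) (max (-y) (x + y - 1)) := by fun_prop
  calc volume {q : ℝ × ℝ | (x, q) ∈ R2}
      = volume {q : ℝ × ℝ | q.1 ∈ Icc (-x) 1 ∧
          max (-x) (max (-q.1) (x + q.1 - 1)) ≤ q.2 ∧
          q.2 ≤ min (1 + x - q.1) (1 - x + q.1)} := by rw [sliceR2b x hx0 hx1]
    _ = ∫⁻ y in Icc (-x) 1, ENNReal.ofReal
          (min (1 + x - y) (1 - x + y) - max (-x) (max (-y) (x + y - 1))) :=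
        vol2 (Icc (-x) 1) measurableSet_Icc (fun y => max (-x) (max (-y) (x + y - 1)))
          (fun y => min (1 + x - y) (1 - x + y)) (by fun_prop) (by fun_prop)
    _ = ∫⁻ y in Ioc (-x) 1, ENNReal.ofReal
          (min (1 + x - y) (1 - x + y) - max (-x) (max (-y) (x + y - 1))) :=
        (setLIntegral_congr Ioc_ae_eq_Icc).symm
    _ = ENNReal.ofReal (∫ y in (-x)..1,
          (min (1 + x - y) (1 - x + y) - max (-x) (max (-y) (x + y - 1)))) := by
        refine lint_Ioc _ _ (by linarith) _ hfc fun y hy => ?_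
        obtain ⟨hy0, hy1⟩ := hy
        refine sub_nonneg.2 (max_le (le_min (by linarith) (by linarith))
          (max_le (le_min (by linarith) (by linarith))
            (le_min (by linarith) (by linarith))))
    _ = ENNReal.ofReal ((1 + 6*x - 11*x^2) / 2) := by
        congr 1
        have i1 : IntervalIntegrable
            (fun y => min (1 + x - y) (1 - x + y) - max (-x) (max (-y) (x + y - 1)))
            volume (-x) x := hfc.intervalIntegrable _ _
        have i2 : IntervalIntegrable
            (fun y => min (1 + x - y) (1 - x + y) - max (-x) (max (-y) (x + y - 1)))
            volume x (1 - 2*x) := hfc.intervalIntegrable _ _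
        have i3 : IntervalIntegrable
            (fun y => min (1 + x - y) (1 - x + y) - max (-x) (max (-y) (x + y - 1)))
            volume (1 - 2*x) 1 := hfc.intervalIntegrable _ _
        have s1 := intervalIntegral.integral_add_adjacent_intervals i1 i2
        have s2 := intervalIntegral.integral_add_adjacent_intervals (i1.trans i2) i3
        have e1 : ∫ y in (-x)..x,
            (min (1 + x - y) (1 - x + y) - max (-x) (max (-y) (x + y - 1))) =
            (1-x) * (x - (-x)) + 2 * ((x^2 - (-x)^2)/2) := by
          rw [← lin_int]
          refine intervalIntegral.integral_congr fun y hy => ?_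
          rw [uIcc_of_le (by linarith)] at hy
          obtain ⟨hy0, hy1⟩ := hy
          rw [min_eq_right (by linarith), max_eq_left (show x + y - 1 ≤ -y by linarith),
            max_eq_right (show -x ≤ -y by linarith)]
          ring
        have e2 : ∫ y in x..(1 - 2*x),
            (min (1 + x - y) (1 - x + y) - max (-x) (max (-y) (x + y - 1))) =
            (1 + 2*x) * ((1 - 2*x) - x) + (-1) * (((1 - 2*x)^2 - x^2)/2) := by
          rw [← lin_int]
          refine intervalIntegral.integral_congr fun y hy => ?_
          rw [uIcc_of_le (by linarith)] at hy
          obtain ⟨hy0, hy1⟩ := hy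
          rw [min_eq_left (by linarith),
            max_eq_left (max_le (by linarith) (by linarith))]
          ring
        have e3 : ∫ y in (1 - 2*x)..1,
            (min (1 + x - y) (1 - x + y) - max (-x) (max (-y) (x + y - 1))) =
            2 * (1 - (1 - 2*x)) + (-2) * ((1^2 - (1 - 2*x)^2)/2) := by
          rw [← lin_int]
          refine intervalIntegral.integral_congr fun y hy => ?_
          rw [uIcc_of_le (by linarith)] at hy
          obtain ⟨hy0, hy1⟩ := hy
          rw [min_eq_left (by linarith),
            max_eq_right (show -y ≤ x + y - 1 by linarith),
            max_eq_right (show -x ≤ x + y - 1 by linarith)]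
          ring
        rw [← s2, ← s1, e1, e2, e3]; ring

private lemma sliceR2c (x : ℝ) (hx0 : 1/3 ≤ x) (hx1 : x ≤ 1) :
    {q : ℝ × ℝ | (x, q) ∈ R2} =
      {q : ℝ × ℝ | q.1 ∈ Icc ((x-1)/2) 1 ∧
        max (-q.1) (x + q.1 - 1) ≤ q.2 ∧
        q.2 ≤ min (1 + x - q.1) (1 - x + q.1)} := by
  ext ⟨y, z⟩
  simp only [R2, Δ, mem_inter_iff, mem_setOf_eq, mem_Icc, max_le_iff, le_min_iff]
  constructor
  · rintro ⟨⟨h1, h2, h3, h4⟩, hxy, hxz, hyz⟩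
    exact ⟨⟨by linarith, by linarith⟩, ⟨by linarith, by linarith⟩,
      by linarith, by linarith⟩
  · rintro ⟨⟨hy0, hy1⟩, ⟨hz0, hz1⟩, hz2, hz3⟩
    exact ⟨⟨by linarith, by linarith, by linarith, by linarith⟩,
      by linarith, by linarith, by linarith⟩

private lemma areaR2c (x : ℝ) (hx0 : 1/3 ≤ x) (hx1 : x ≤ 1) :
    volume {q : ℝ × ℝ | (x, q) ∈ R2} = ENNReal.ofReal (1 - x^2) := by
  have hfc : Continuous fun y : ℝ =>
      min (1 + x - y) (1 - x + y) - max (-y) (x + y - 1) := by fun_prop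
  calc volume {q : ℝ × ℝ | (x, q) ∈ R2}
      = volume {q : ℝ × ℝ | q.1 ∈ Icc ((x-1)/2) 1 ∧
          max (-q.1) (x + q.1 - 1) ≤ q.2 ∧
          q.2 ≤ min (1 + x - q.1) (1 - x + q.1)} := by rw [sliceR2c x hx0 hx1]
    _ = ∫⁻ y in Icc ((x-1)/2) 1, ENNReal.ofReal
          (min (1 + x - y) (1 - x + y) - max (-y) (x + y - 1)) :=
        vol2 (Icc ((x-1)/2) 1) measurableSet_Icc (fun y => max (-y) (x + y - 1))
          (fun y => min (1 + x - y) (1 - x + y)) (by fun_prop) (by fun_prop)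
    _ = ∫⁻ y in Ioc ((x-1)/2) 1, ENNReal.ofReal
          (min (1 + x - y) (1 - x + y) - max (-y) (x + y - 1)) :=
        (setLIntegral_congr Ioc_ae_eq_Icc).symm
    _ = ENNReal.ofReal (∫ y in ((x-1)/2)..1,
          (min (1 + x - y) (1 - x + y) - max (-y) (x + y - 1))) := by
        refine lint_Ioc _ _ (by linarith) _ hfc fun y hy => ?_
        obtain ⟨hy0, hy1⟩ := hy
        refine sub_nonneg.2 (max_le (le_min (by linarith) (by linarith))
          (le_min (by linarith) (by linarith)))
    _ = ENNReal.ofReal (1 - x^2) := by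
        congr 1
        have i1 : IntervalIntegrable
            (fun y => min (1 + x - y) (1 - x + y) - max (-y) (x + y - 1))
            volume ((x-1)/2) ((1-x)/2) := hfc.intervalIntegrable _ _
        have i2 : IntervalIntegrable
            (fun y => min (1 + x - y) (1 - x + y) - max (-y) (x + y - 1))
            volume ((1-x)/2) x := hfc.intervalIntegrable _ _
        have i3 : IntervalIntegrable
            (fun y => min (1 + x - y) (1 - x + y) - max (-y) (x + y - 1))
            volume x 1 := hfc.intervalIntegrable _ _
        have s1 := intervalIntegral.integral_add_adjacent_intervals i1 i2
        have s2 := intervalIntegral.integral_add_adjacent_intervals (i1.trans i2) i3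
        have e1 : ∫ y in ((x-1)/2)..((1-x)/2),
            (min (1 + x - y) (1 - x + y) - max (-y) (x + y - 1)) =
            (1-x) * ((1-x)/2 - (x-1)/2) + 2 * ((((1-x)/2)^2 - ((x-1)/2)^2)/2) := by
          rw [← lin_int]
          refine intervalIntegral.integral_congr fun y hy => ?_
          rw [uIcc_of_le (by linarith)] at hy
          obtain ⟨hy0, hy1⟩ := hy
          rw [min_eq_right (by linarith), max_eq_left (show x + y - 1 ≤ -y by linarith)]
          ring
        have e2 : ∫ y in ((1-x)/2)..x,
            (min (1 + x - y) (1 - x + y) - max (-y) (x + y - 1)) =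
            (2 - 2*x) * (x - (1-x)/2) + 0 * ((x^2 - ((1-x)/2)^2)/2) := by
          rw [← lin_int]
          refine intervalIntegral.integral_congr fun y hy => ?_
          rw [uIcc_of_le (by linarith)] at hy
          obtain ⟨hy0, hy1⟩ := hy
          rw [min_eq_right (by linarith), max_eq_right (show -y ≤ x + y - 1 by linarith)]
          ring
        have e3 : ∫ y in x..1,
            (min (1 + x - y) (1 - x + y) - max (-y) (x + y - 1)) =
            2 * (1 - x) + (-2) * ((1^2 - x^2)/2) := by
          rw [← lin_int]
          refine intervalIntegral.integral_congr fun y hy => ?_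
          rw [uIcc_of_le (by linarith)] at hy
          obtain ⟨hy0, hy1⟩ := hy
          rw [min_eq_left (by linarith), max_eq_right (show -y ≤ x + y - 1 by linarith)]
          ring
        rw [← s2, ← s1, e1, e2, e3]; ring

private lemma volR2 : volume R2 = 2 / 3 := by
  rw [vol3 R2 measurable_R2]
  set g1 : ℝ → ENNReal := fun x => ENNReal.ofReal ((1 + 6*x + 9*x^2) / 2) with hg1
  set g2 : ℝ → ENNReal := fun x => ENNReal.ofReal ((1 + 6*x - 11*x^2) / 2) with hg2
  set g3 : ℝ → ENNReal := fun x => ENNReal.ofReal (1 - x^2) with hg3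
  have step : ∀ x : ℝ, volume {q : ℝ × ℝ | (x, q) ∈ R2} =
      (Icc (-1/3 : ℝ) 0).indicator g1 x + (Ioc (0:ℝ) (1/3)).indicator g2 x +
      (Ioc (1/3 : ℝ) 1).indicator g3 x := by
    intro x
    by_cases h1 : x ∈ Icc (-1/3 : ℝ) 0
    · rw [indicator_of_mem h1,
        indicator_of_notMem (fun h : x ∈ Ioc (0:ℝ) (1/3) => absurd h.1 (not_lt.2 h1.2)),
        indicator_of_notMem
          (fun h : x ∈ Ioc (1/3:ℝ) 1 => absurd h.1 (not_lt.2 (by linarith [h1.2]))),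
        add_zero, add_zero]
      exact areaR2a x h1.1 h1.2
    by_cases h2 : x ∈ Ioc (0:ℝ) (1/3)
    · rw [indicator_of_mem h2, indicator_of_notMem h1,
        indicator_of_notMem
          (fun h : x ∈ Ioc (1/3:ℝ) 1 => absurd h.1 (not_lt.2 h2.2)),
        zero_add, add_zero]
      exact areaR2b x h2.1.le h2.2
    by_cases h3 : x ∈ Ioc (1/3 : ℝ) 1
    · rw [indicator_of_mem h3, indicator_of_notMem h1, indicator_of_notMem h2,
        zero_add, zero_add]
      exact areaR2c x h3.1.le h3.2
    · have hx : x ∉ Icc (-1/3 : ℝ) 1 := by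
        intro hmem
        obtain ⟨ha, hb⟩ := mem_Icc.1 hmem
        rcases le_total x 0 with h | h
        · exact h1 (mem_Icc.2 ⟨ha, h⟩)
        · have hx0 : (0:ℝ) < x := h.lt_of_ne' (fun e => h1 (mem_Icc.2 ⟨ha, le_of_eq e⟩))
          rcases le_total x (1/3) with h' | h'
          · exact h2 (mem_Ioc.2 ⟨hx0, h'⟩)
          · have hx13 : (1/3 : ℝ) < x :=
              h'.lt_of_ne' (fun e => h2 (mem_Ioc.2 ⟨hx0, le_of_eq e⟩))
            exact h3 (mem_Ioc.2 ⟨hx13, hb⟩)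
      rw [sliceR2_empty x hx, indicator_of_notMem h1, indicator_of_notMem h2,
        indicator_of_notMem h3, add_zero, add_zero]
      exact measure_empty
  rw [lintegral_congr step]
  have m1 : Measurable ((Icc (-1/3 : ℝ) 0).indicator g1) :=
    (ENNReal.measurable_ofReal.comp (by fun_prop)).indicator measurableSet_Icc
  have m2 : Measurable ((Ioc (0:ℝ) (1/3)).indicator g2) :=
    (ENNReal.measurable_ofReal.comp (by fun_prop)).indicator measurableSet_Ioc
  have m3 : Measurable ((Ioc (1/3 : ℝ) 1).indicator g3) :=
    (ENNReal.measurable_ofReal.comp (by fun_prop)).indicator measurableSet_Ioc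
  rw [lintegral_add_right _ m3, lintegral_add_right _ m2,
    lintegral_indicator measurableSet_Icc, lintegral_indicator measurableSet_Ioc,
    lintegral_indicator measurableSet_Ioc,
    ← setLIntegral_congr (Ioc_ae_eq_Icc (a := (-1/3 : ℝ)) (b := (0:ℝ)))]
  have T1 : ∫⁻ x in Ioc (-1/3 : ℝ) 0, g1 x = ENNReal.ofReal (1/18 : ℝ) := by
    rw [hg1, lint_Ioc _ _ (by norm_num) _ (by fun_prop)
      (fun y hy => by obtain ⟨h0, h1⟩ := hy; nlinarith)]
    congr 1
    rw [show (fun x : ℝ => (1 + 6*x + 9*x^2)/2) =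
      fun x : ℝ => 1/2 + 3 * x + (9/2) * x^2 by funext y; ring, quad_int]
    norm_num
  have T2 : ∫⁻ x in Ioc (0:ℝ) (1/3), g2 x = ENNReal.ofReal (43/162 : ℝ) := by
    rw [hg2, lint_Ioc _ _ (by norm_num) _ (by fun_prop)
      (fun y hy => by
        obtain ⟨h0, h1⟩ := hy
        nlinarith [mul_nonneg h0.le (show (0:ℝ) ≤ 1 - 3*y by linarith)])]
    congr 1
    rw [show (fun x : ℝ => (1 + 6*x - 11*x^2)/2) =
      fun x : ℝ => 1/2 + 3 * x + (-11/2) * x^2 by funext y; ring, quad_int]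
    norm_num
  have T3 : ∫⁻ x in Ioc (1/3 : ℝ) 1, g3 x = ENNReal.ofReal (28/81 : ℝ) := by
    rw [hg3, lint_Ioc _ _ (by norm_num) _ (by fun_prop)
      (fun y hy => by obtain ⟨h0, h1⟩ := hy; nlinarith)]
    congr 1
    rw [show (fun x : ℝ => 1 - x^2) =
      fun x : ℝ => 1 + 0 * x + (-1) * x^2 by funext y; ring, quad_int]
    norm_num
  rw [T1, T2, T3, ← ENNReal.ofReal_add (by norm_num) (by norm_num),
    ← ENNReal.ofReal_add (by norm_num) (by norm_num)]
  rw [show (1/18 : ℝ) + 43/162 + 28/81 = 2/3 by norm_num,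
    ENNReal.ofReal_div_of_pos (by norm_num)]
  norm_num

/-- The volume of K3 Markov matrices with positive eigenvalues is `1/2`, and the volume
of those with `a ≥ b, c, d` (i.e. `x+y ≥ 0`, `x+z ≥ 0`, `y+z ≥ 0`) is `2/3`. -/
theorem stmt_18 :
    volume (Δ ∩ {p : ℝ × ℝ × ℝ | 0 < p.1 ∧ 0 < p.2.1 ∧ 0 < p.2.2}) = 1 / 2 ∧
    volume (Δ ∩ {p : ℝ × ℝ × ℝ |
      0 ≤ p.1 + p.2.1 ∧ 0 ≤ p.1 + p.2.2 ∧ 0 ≤ p.2.1 + p.2.2}) = 2 / 3 := by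
  exact ⟨vol_strict.trans volR1, volR2⟩
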